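/- Let P be a probability distribution on a finite set of size m with probabilities p(i), and let p̂(i) = (1/n)∑_{j=1}^n 1{s_j = i} be the empirical probabilities from n i.i.d. samples s_1,…,s_n drawn from P. Then E[∑_{i=1}^m |p̂(i) − p(i)|] ≤ √(m/n). -/

import Mathlib

open MeasureTheory ProbabilityTheory

theorem empirical_tv_expectation_bound
    {Ω : Type*} [MeasurableSpace Ω] (μ : Measure Ω) [IsProbabilityMeasure μ]
    (m n : ℕ) (hm : 0 < m) (hn : 0 < n) (p : Fin m → ℝ)
    (hp : ∀ i, 0 ≤ p i) (hps : ∑ i, p i = 1)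
    (s : Fin n → Ω → Fin m) (hmeas : ∀ j, Measurable (s j))
    (hindep : iIndepFun s μ)
    (hdist : ∀ j i, μ {ω | s j ω = i} = ENNReal.ofReal (p i)) :
    ∫ ω, (∑ i, |((n : ℝ)⁻¹ * ∑ j, if s j ω = i then (1 : ℝ) else 0) - p i|) ∂μ ≤
      Real.sqrt ((m : ℝ) / n) := by
  classical
  set X : Fin m → Fin n → Ω → ℝ := fun i j ω => if s j ω = i then 1 else 0 with hXdef
  have hXmeas : ∀ i j, Measurable (X i j) := fun i j =>
    Measurable.ite (hmeas j (measurableSet_singleton i)) measurable_const measurable_const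
  have hXmem : ∀ i j, MemLp (X i j) 2 μ := by
    intro i j
    refine MemLp.of_bound (hXmeas i j).aestronglyMeasurable 1 (ae_of_all _ fun ω => ?_)
    by_cases h : s j ω = i <;> simp [X, h]
  have hXint : ∀ i j, Integrable (X i j) μ := fun i j => (hXmem i j).integrable one_le_two
  have hEX : ∀ i j, ∫ ω, X i j ω ∂μ = p i := by
    intro i j
    have h1 : X i j = Set.indicator (s j ⁻¹' {i}) (fun _ => (1:ℝ)) := by
      ext ω; by_cases h : s j ω = i <;> simp [X, h]
    rw [h1, integral_indicator_const _ (hmeas j (measurableSet_singleton i))]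
    have : μ (s j ⁻¹' {i}) = ENNReal.ofReal (p i) := hdist j i
    rw [measureReal_def, this, ENNReal.toReal_ofReal (hp i)]
    simp
  have hXsq : ∀ i j, X i j ^ 2 = X i j := by
    intro i j; ext ω; by_cases h : s j ω = i <;> simp [X, h]
  have hVarX : ∀ i j, variance (X i j) μ = p i - p i ^ 2 := by
    intro i j
    rw [variance_eq_sub (hXmem i j), hXsq, hEX]
  -- independence of the indicators
  have hXindep : ∀ i : Fin m, iIndepFun (fun j => X i j) μ := by
    intro i
    have := hindep.comp (fun _ k => if k = i then (1:ℝ) else 0)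
      (fun _ => measurable_of_countable _)
    exact this
  set Y : Fin m → Ω → ℝ := fun i => ∑ j, X i j with hYdef
  have hYmem : ∀ i, MemLp (Y i) 2 μ := fun i =>
    memLp_finset_sum' _ (fun j _ => hXmem i j)
  have hEY : ∀ i, ∫ ω, Y i ω ∂μ = n * p i := by
    intro i
    have : ∫ ω, Y i ω ∂μ = ∑ j, ∫ ω, X i j ω ∂μ := by
      rw [hYdef]
      simpa using integral_finset_sum Finset.univ (fun j _ => hXint i j)
    rw [this]
    simp [hEX i]
  have hVarY : ∀ i, variance (Y i) μ ≤ n * p i := by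
    intro i
    have h1 : variance (Y i) μ = ∑ j, variance (X i j) μ := by
      refine IndepFun.variance_sum (fun j _ => hXmem i j) ?_
      intro j _ k _ hjk
      exact (hXindep i).indepFun hjk
    rw [h1]
    have : ∑ j : Fin n, variance (X i j) μ = n * (p i - p i ^ 2) := by
      simp [hVarX i]; ring
    rw [this]
    nlinarith [hp i, sq_nonneg (p i), (Nat.cast_pos.mpr hn : (0:ℝ) < n)]
  -- key pointwise bound for each i
  have key : ∀ i, ∫ ω, |((n : ℝ)⁻¹ * ∑ j, X i j ω) - p i| ∂μ ≤ Real.sqrt (p i / n) := by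
    intro i
    set Z : Ω → ℝ := fun ω => Y i ω - n * p i with hZdef
    have hZmem : MemLp Z 2 μ := (hYmem i).sub (memLp_const _)
    have hZabs : MemLp (fun ω => |Z ω|) 2 μ := hZmem.abs
    have hintZ : ∫ ω, Z ω ^ 2 ∂μ = variance (Y i) μ := by
      rw [variance_eq_integral (hYmem i).aestronglyMeasurable.aemeasurable]
      congr 1
      ext ω
      simp [Z, hEY i]
    -- E|Z| ≤ sqrt(E Z^2)
    have habs : (∫ ω, |Z ω| ∂μ) ^ 2 ≤ ∫ ω, Z ω ^ 2 ∂μ := by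
      have h0 := variance_nonneg (fun ω => |Z ω|) μ
      rw [variance_eq_sub hZabs] at h0
      have he : (fun ω => |Z ω|) ^ 2 = fun ω => Z ω ^ 2 := by
        ext ω; simp [sq_abs]
      rw [he] at h0
      linarith
    have hEZ : ∫ ω, |Z ω| ∂μ ≤ Real.sqrt (n * p i) := by
      rw [← Real.sqrt_sq (integral_nonneg (fun ω => abs_nonneg _))]
      apply Real.sqrt_le_sqrt
      calc (∫ ω, |Z ω| ∂μ) ^ 2 ≤ ∫ ω, Z ω ^ 2 ∂μ := habs
        _ = variance (Y i) μ := hintZ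
        _ ≤ n * p i := hVarY i
    have heq : ∀ ω, |((n : ℝ)⁻¹ * ∑ j, X i j ω) - p i| = (n : ℝ)⁻¹ * |Z ω| := by
      intro ω
      have hn' : (n : ℝ) ≠ 0 := Nat.cast_ne_zero.mpr hn.ne'
      have h2 : ((n : ℝ)⁻¹ * ∑ j, X i j ω) - p i = (n : ℝ)⁻¹ * Z ω := by
        simp only [Z, Y]
        field_simp
        rw [Finset.sum_apply]
      rw [h2, abs_mul, abs_of_nonneg (inv_nonneg.mpr (Nat.cast_nonneg n))]
    calc ∫ ω, |((n : ℝ)⁻¹ * ∑ j, X i j ω) - p i| ∂μ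
        = ∫ ω, (n : ℝ)⁻¹ * |Z ω| ∂μ := by simp_rw [heq]
      _ = (n : ℝ)⁻¹ * ∫ ω, |Z ω| ∂μ := integral_const_mul _ _
      _ ≤ (n : ℝ)⁻¹ * Real.sqrt (n * p i) := by
          apply mul_le_mul_of_nonneg_left hEZ (inv_nonneg.mpr (Nat.cast_nonneg n))
      _ = Real.sqrt (p i / n) := by
          have hn' : (0:ℝ) < n := Nat.cast_pos.mpr hn
          rw [show p i / (n:ℝ) = (n * p i) / (n:ℝ)^2 by field_simp,
            Real.sqrt_div (mul_nonneg (Nat.cast_nonneg n) (hp i)), Real.sqrt_sq hn'.le]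
          ring
  -- integrability of each summand
  have hintegrable : ∀ i, Integrable (fun ω => |((n : ℝ)⁻¹ * ∑ j, X i j ω) - p i|) μ := by
    intro i
    exact ((((integrable_finset_sum _ (fun j _ => hXint i j)).const_mul _).sub
      (integrable_const _))).abs
  calc ∫ ω, (∑ i, |((n : ℝ)⁻¹ * ∑ j, if s j ω = i then (1:ℝ) else 0) - p i|) ∂μ
      = ∑ i, ∫ ω, |((n : ℝ)⁻¹ * ∑ j, X i j ω) - p i| ∂μ := by
        rw [integral_finset_sum _ (fun i _ => hintegrable i)]
    _ ≤ ∑ i, Real.sqrt (p i / n) := Finset.sum_le_sum (fun i _ => key i)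
    _ = ∑ i, Real.sqrt (p i) * Real.sqrt ((n:ℝ)⁻¹) := by
        congr 1; ext i
        rw [div_eq_mul_inv, Real.sqrt_mul (hp i)]
    _ ≤ Real.sqrt (∑ i, p i) * Real.sqrt (∑ _i : Fin m, (n:ℝ)⁻¹) :=
        Real.sum_sqrt_mul_sqrt_le _ hp (fun _ => inv_nonneg.mpr (Nat.cast_nonneg n))
    _ = Real.sqrt ((m : ℝ) / n) := by
        rw [hps, Real.sqrt_one, one_mul]
        congr 1
        simp [div_eq_mul_inv]
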